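/- Let (X,d) be a metric space, μ a Borel measure, n > 0, C ≥ 1, and E ⊂ X a Borel set such that for every x ∈ E there exists r_x > 0 with μ(B(x,r)) ≥ C⁻¹ rⁿ for all r ∈ (0, r_x]. Then for every open set O ⊇ E one has H^n(E) ≤ 10ⁿ C μ(O); consequently H^n(E) ≤ 10ⁿ C μ(E) whenever μ is outer regular on E. -/

import Mathlib

open Set Metric MeasureTheory

private lemma aux_vitali {X : Type*} [MetricSpace X] [MeasurableSpace X]
    [BorelSpace X] (μ : Measure X) (n : ℝ) (hn : 0 < n) (C : ℝ) (hC : 1 ≤ C)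
    (E : Set X)
    (hlow : ∀ x ∈ E, ∃ rx > (0:ℝ), ∀ r ∈ Ioc (0:ℝ) rx,
      ENNReal.ofReal (C⁻¹ * r ^ n) ≤ μ (ball x r))
    (O : Set X) (hO : IsOpen O) (hEO : E ⊆ O) (hμO : μ O ≠ ⊤)
    (ε : ℝ) (hε : 0 < ε) :
    ∃ (u : Set X) (ρ : X → ℝ), u.Countable ∧ (∀ b ∈ u, 0 < ρ b ∧ ρ b ≤ ε) ∧
      (E ⊆ ⋃ i : u, closedBall (i : X) (5 * ρ i)) ∧
      (∀ (hcnt : Countable u),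
        ∑' i : u, EMetric.diam (closedBall (i : X) (5 * ρ i)) ^ n ≤
          ENNReal.ofReal (10 ^ n * C) * μ O) := by
  have key : ∀ x, ∃ ρ : ℝ, x ∈ E →
      (0 < ρ ∧ ρ ≤ ε ∧ closedBall x ρ ⊆ O ∧
        ENNReal.ofReal (C⁻¹ * ρ ^ n) ≤ μ (ball x ρ)) := by
    intro x
    by_cases hx : x ∈ E
    · obtain ⟨rx, hrx, hr⟩ := hlow x hx
      obtain ⟨δ, hδ, hδO⟩ := Metric.isOpen_iff.1 hO x (hEO hx)
      refine ⟨min (min rx ε) (δ / 2), fun _ => ⟨?_, ?_, ?_, ?_⟩⟩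
      · exact lt_min (lt_min hrx hε) (half_pos hδ)
      · exact (min_le_left _ _).trans (min_le_right _ _)
      · exact (closedBall_subset_ball
          (lt_of_le_of_lt (min_le_right _ _) (half_lt_self hδ))).trans hδO
      · exact hr _ ⟨lt_min (lt_min hrx hε) (half_pos hδ),
          (min_le_left _ _).trans (min_le_left _ _)⟩
    · exact ⟨1, fun h => absurd h hx⟩
  choose ρ hρ using key
  obtain ⟨u, huE, hdisj, hcov⟩ :=
    Vitali.exists_disjoint_subfamily_covering_enlargement_closedBall E id ρ ε
      (fun a ha => (hρ a ha).2.1) 5 (by norm_num)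
  have hposρ : ∀ b ∈ u, 0 < ρ b := fun b hb => (hρ b (huE hb)).1
  have hposball : ∀ b ∈ u, 0 < μ (ball b (ρ b)) := by
    intro b hb
    refine lt_of_lt_of_le ?_ (hρ b (huE hb)).2.2.2
    exact ENNReal.ofReal_pos.2 (mul_pos (inv_pos.2 (lt_of_lt_of_le one_pos hC))
      (Real.rpow_pos_of_pos (hposρ b hb) n))
  have hdisj' : Pairwise (Function.onFun Disjoint fun i : u => ball (i : X) (ρ i)) := by
    intro i j hij
    exact ((hdisj i.2 j.2 (Subtype.coe_injective.ne hij)).mono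
      ball_subset_closedBall ball_subset_closedBall)
  have hUO : (⋃ i : u, ball (i : X) (ρ i)) ⊆ O := by
    refine iUnion_subset fun i => ?_
    exact ball_subset_closedBall.trans (hρ i (huE i.2)).2.2.1
  have hUfin : μ (⋃ i : u, ball (i : X) (ρ i)) ≠ ⊤ :=
    ((measure_mono hUO).trans_lt (lt_top_iff_ne_top.2 hμO)).ne
  have hcnt : u.Countable := by
    have h1 := MeasureTheory.Measure.countable_meas_pos_of_disjoint_of_meas_iUnion_ne_top μ
      (As := fun i : u => ball (i : X) (ρ i)) (fun i => measurableSet_ball) hdisj' hUfin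
    have h2 : {i : u | 0 < μ (ball (i : X) (ρ i))} = Set.univ :=
      eq_univ_of_forall fun i => hposball i i.2
    rw [h2, Set.countable_univ_iff] at h1
    exact Set.countable_coe_iff.1 h1
  refine ⟨u, ρ, hcnt, fun b hb => ⟨hposρ b hb, (hρ b (huE hb)).2.1⟩, ?_, ?_⟩
  · intro x hx
    obtain ⟨b, hb, hsub⟩ := hcov x hx
    exact mem_iUnion.2 ⟨⟨b, hb⟩, hsub (mem_closedBall_self (hρ x hx).1.le)⟩
  · intro _
    have hconst0 : (0:ℝ) < 10 ^ n * C :=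
      mul_pos (Real.rpow_pos_of_pos (by norm_num) n) (lt_of_lt_of_le one_pos hC)
    calc ∑' i : u, EMetric.diam (closedBall (i : X) (5 * ρ i)) ^ n
        ≤ ∑' i : u, ENNReal.ofReal (10 ^ n * C) * μ (ball (i : X) (ρ i)) := by
          refine ENNReal.tsum_le_tsum fun i => ?_
          have hρi := hposρ i i.2
          have hdiam : EMetric.diam (closedBall (i : X) (5 * ρ i)) ≤
              ENNReal.ofReal (10 * ρ i) := by
            refine Metric.ediam_le_of_forall_dist_le fun x hx y hy => ?_
            have h1 := mem_closedBall.1 hx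
            have h2 := mem_closedBall.1 hy
            calc dist x y ≤ dist x (i : X) + dist (i : X) y := dist_triangle _ _ _
              _ ≤ 5 * ρ i + 5 * ρ i := by
                  rw [dist_comm (i : X) y]; exact add_le_add h1 h2
              _ = 10 * ρ i := by ring
          calc EMetric.diam (closedBall (i : X) (5 * ρ i)) ^ n
              ≤ ENNReal.ofReal (10 * ρ i) ^ n := ENNReal.rpow_le_rpow hdiam hn.le
            _ = ENNReal.ofReal ((10 * ρ i) ^ n) :=
                ENNReal.ofReal_rpow_of_nonneg (by positivity) hn.le
            _ = ENNReal.ofReal ((10 ^ n * C) * (C⁻¹ * ρ i ^ n)) := by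
                congr 1
                rw [Real.mul_rpow (by norm_num) hρi.le]
                field_simp
            _ = ENNReal.ofReal (10 ^ n * C) * ENNReal.ofReal (C⁻¹ * ρ i ^ n) :=
                ENNReal.ofReal_mul hconst0.le
            _ ≤ ENNReal.ofReal (10 ^ n * C) * μ (ball (i : X) (ρ i)) :=
                mul_le_mul_right ((hρ i (huE i.2)).2.2.2) _
      _ = ENNReal.ofReal (10 ^ n * C) * ∑' i : u, μ (ball (i : X) (ρ i)) :=
          ENNReal.tsum_mul_left
      _ = ENNReal.ofReal (10 ^ n * C) * μ (⋃ i : u, ball (i : X) (ρ i)) := by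
          rw [measure_iUnion hdisj' fun i => measurableSet_ball]
      _ ≤ ENNReal.ofReal (10 ^ n * C) * μ O := mul_le_mul_right (measure_mono hUO) _

/-- If `μ(B(x,r)) ≥ C⁻¹ rⁿ` for all small `r` at every point of `E`, then the `n`-dimensional
Hausdorff measure of `E` is controlled by `μ` on open neighbourhoods of `E`, and by `μ(E)`
itself whenever `μ` is outer regular on `E`. -/
theorem hausdorff_le_of_lower_ahlfors {X : Type*} [MetricSpace X] [MeasurableSpace X]
    [BorelSpace X] (μ : Measure X) (n : ℝ) (hn : 0 < n) (C : ℝ) (hC : 1 ≤ C)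
    (E : Set X) (hE : MeasurableSet E)
    (hlow : ∀ x ∈ E, ∃ rx > (0:ℝ), ∀ r ∈ Ioc (0:ℝ) rx,
      ENNReal.ofReal (C⁻¹ * r ^ n) ≤ μ (ball x r)) :
    (∀ O : Set X, IsOpen O → E ⊆ O →
        μH[n] E ≤ ENNReal.ofReal (10 ^ n * C) * μ O) ∧
      ((μ E = ⨅ (O : Set X) (_ : IsOpen O) (_ : E ⊆ O), μ O) →
        μH[n] E ≤ ENNReal.ofReal (10 ^ n * C) * μ E) := by
  have ha0 : ENNReal.ofReal (10 ^ n * C) ≠ 0 :=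
    (ENNReal.ofReal_pos.2 (mul_pos (Real.rpow_pos_of_pos (by norm_num) n)
      (lt_of_lt_of_le one_pos hC))).ne'
  have main : ∀ O : Set X, IsOpen O → E ⊆ O →
      μH[n] E ≤ ENNReal.ofReal (10 ^ n * C) * μ O := by
    intro O hO hEO
    by_cases hμO : μ O = ⊤
    · rw [hμO, ENNReal.mul_top ha0]; exact le_top
    have hεpos : ∀ k : ℕ, (0:ℝ) < ((k:ℝ) + 1)⁻¹ := fun k => by positivity
    choose u ρ hcnt hρ hcov hsum using fun k : ℕ =>
      aux_vitali μ n hn C hC E hlow O hO hEO hμO (((k:ℝ) + 1)⁻¹) (hεpos k)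
    haveI : ∀ k : ℕ, Countable (u k) := fun k => (hcnt k).to_subtype
    have hle := MeasureTheory.Measure.hausdorffMeasure_le_liminf_tsum (X := X) n E
      (l := Filter.atTop) (r := fun k : ℕ => ENNReal.ofReal (10 * ((k:ℝ) + 1)⁻¹))
      (t := fun k (i : u k) => closedBall (i : X) (5 * ρ k i)) ?_ ?_ ?_
    · have h2 := Filter.limsup_le_of_le (f := Filter.atTop)
        (h := Filter.Eventually.of_forall fun k => hsum k inferInstance)
      have h1 : Filter.liminf
          (fun k => ∑' i : u k, EMetric.diam (closedBall (i : X) (5 * ρ k i)) ^ n)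
          Filter.atTop ≤ Filter.limsup
          (fun k => ∑' i : u k, EMetric.diam (closedBall (i : X) (5 * ρ k i)) ^ n)
          Filter.atTop := Filter.liminf_le_limsup
      exact hle.trans (h1.trans h2)
    · have h0 : Filter.Tendsto (fun k : ℕ => 10 * ((k:ℝ) + 1)⁻¹)
          Filter.atTop (nhds 0) := by
        have := tendsto_one_div_add_atTop_nhds_zero_nat.const_mul (10:ℝ)
        simpa [one_div, mul_zero] using this
      have := ENNReal.tendsto_ofReal h0
      simpa using this
    · refine Filter.Eventually.of_forall fun k i => ?_
      have hρi := hρ k i i.2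
      refine Metric.ediam_le_of_forall_dist_le fun x hx y hy => ?_
      have h1 := mem_closedBall.1 hx
      have h2 := mem_closedBall.1 hy
      calc dist x y ≤ dist x (i : X) + dist (i : X) y := dist_triangle _ _ _
        _ ≤ 5 * ρ k i + 5 * ρ k i := by
            rw [dist_comm (i : X) y]; exact add_le_add h1 h2
        _ = 10 * ρ k i := by ring
        _ ≤ 10 * ((k:ℝ) + 1)⁻¹ := by nlinarith [hρi.1, hρi.2]
    · exact Filter.Eventually.of_forall fun k => hcov k
  refine ⟨main, fun h => ?_⟩
  calc μH[n] E ≤ ⨅ (O : Set X) (_ : IsOpen O) (_ : E ⊆ O),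
        ENNReal.ofReal (10 ^ n * C) * μ O :=
      le_iInf fun O => le_iInf fun hO => le_iInf fun hEO => main O hO hEO
    _ = ENNReal.ofReal (10 ^ n * C) * μ E := by
        rw [h]
        simp only [ENNReal.mul_iInf_of_ne ha0 ENNReal.ofReal_ne_top]
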